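/- There exists a weakly graphic homogeneous relation that does not satisfy the modular quotient property. Concretely, on X = {x,y,s,t}, the homogeneous relation K given by the partitions K_x = {{y},{s},{t}}, K_y = {{x},{s,t}}, K_s = {{x,y},{t}}, K_t = {{x,y},{s}} is weakly graphic, {x,y} is a homogeneous module of K, but ¬K(x|st) while K(y|st). -/
import Mathlib


/-- `H` is a homogeneous relation: for each `x`, the binary relation
`H x · ·` is an equivalence relation on the elements distinct from `x`. -/
def IsHomRel {X : Type*} (H : X → X → X → Prop) : Prop :=
  (∀ x y, y ≠ x → H x y y) ∧
  (∀ x y z, y ≠ x → z ≠ x → H x y z → H x z y) ∧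
  (∀ x y z w, y ≠ x → z ≠ x → w ≠ x → H x y z → H x z w → H x y w)

/-- `M` is a homogeneous module of `H`. -/
def IsModule {X : Type*} (H : X → X → X → Prop) (M : Set X) : Prop :=
  ∀ m ∈ M, ∀ m' ∈ M, ∀ x ∉ M, H x m m'

/-- Two sets overlap. -/
def Overlap {X : Type*} (A B : Set X) : Prop :=
  (A ∩ B).Nonempty ∧ (A \ B).Nonempty ∧ (B \ A).Nonempty

def WeaklyGraphic {X : Type*} (H : X → X → X → Prop) : Prop :=
  ∀ x y z : X, x ≠ y → x ≠ z → y ≠ z → H y x z → H z x y → H x y z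

/-- The relation `K` on `{x,y,s,t} = {0,1,2,3}` given by the partitions
`K_x = {{y},{s},{t}}`, `K_y = {{x},{s,t}}`, `K_s = {{x,y},{t}}`, `K_t = {{x,y},{s}}`. -/
def K : Fin 4 → Fin 4 → Fin 4 → Prop := fun a u v =>
  u = v ∨
  (a = 1 ∧ (u = 2 ∨ u = 3) ∧ (v = 2 ∨ v = 3)) ∨
  ((a = 2 ∨ a = 3) ∧ (u = 0 ∨ u = 1) ∧ (v = 0 ∨ v = 1))

instance decK : ∀ a u v, Decidable (K a u v) := fun a u v => by
  unfold K; infer_instance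

theorem stmt_10 :
    IsHomRel K ∧ WeaklyGraphic K ∧ IsModule K ({0, 1} : Set (Fin 4)) ∧
      ¬ K 0 2 3 ∧ K 1 2 3 := by
  refine ⟨⟨?_, ?_, ?_⟩, ?_, ?_, ?_, ?_⟩
  · decide
  · decide
  · decide
  · unfold WeaklyGraphic; decide
  · intro m hm m' hm' x hx
    simp only [Set.mem_insert_iff, Set.mem_singleton_iff] at hm hm' hx
    push_neg at hx
    revert hm hm' hx
    revert m m' x
    decide
  · decide
  · decide
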